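/- Let (A,σ) be a pre-metric group over a field K and H ≤ A an isotropic subgroup (σ restricted to H is identically 1). Then the Gauss sum satisfies Σ(A) = |H| · Σ(H^⊥/H), where H^⊥ is the orthogonal complement of H with respect to δσ and Σ denotes the sum of the values of the (induced) quadratic form. -/

import Mathlib

/-- Gauss sum and isotropic subgroups: if `H` is an isotropic subgroup for the
quadratic form `σ` on a pre-metric group `A`, and `HP = H^⊥` is the orthogonal
complement of `H` with respect to `δσ`, then `Σ(A) = |H| · Σ(H^⊥/H)`, where
`σbar` is the induced quadratic form on the quotient. -/
theorem stmt2 {K : Type*} [Field K] {A : Type*} [CommGroup A] [Fintype A]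
    (σ : A → Kˣ)
    (hinv : ∀ a : A, σ a⁻¹ = σ a)
    (hδ : ∀ a b c : A,
      σ (a * b * c) * (σ (a * b))⁻¹ * (σ c)⁻¹ =
        (σ (a * c) * (σ a)⁻¹ * (σ c)⁻¹) * (σ (b * c) * (σ b)⁻¹ * (σ c)⁻¹))
    (H : Subgroup A) (hiso : ∀ h ∈ H, σ h = 1)
    (HP : Subgroup A)
    (hHP : ∀ a : A, a ∈ HP ↔ ∀ h ∈ H, σ (a * h) = σ a * σ h)
    [Fintype (HP ⧸ H.subgroupOf HP)]
    (σbar : (HP ⧸ H.subgroupOf HP) → Kˣ)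
    (hσbar : ∀ x : HP, σbar (QuotientGroup.mk x) = σ (x : A)) :
    ∑ a : A, (σ a : K) =
      (Nat.card H : K) * ∑ q : HP ⧸ H.subgroupOf HP, (σbar q : K) := by
  classical
  haveI : Fintype H := Fintype.ofFinite _
  haveI : Fintype (A ⧸ H) := Fintype.ofFinite _
  -- H ≤ HP
  have hHle : H ≤ HP := by
    intro h hh
    rw [hHP]
    intro h' hh'
    rw [hiso h hh, hiso h' hh', hiso _ (H.mul_mem hh hh'), one_mul]
  -- key coset-sum computation
  have key : ∀ y : A, ∑ h : H, (σ (y * h) : K) =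
      if y ∈ HP then (Nat.card H : K) * σ y else 0 := by
    intro y
    by_cases hy : y ∈ HP
    · rw [if_pos hy]
      have hconst : ∀ h : H, (σ (y * h) : K) = σ y := by
        intro h
        rw [(hHP y).1 hy h h.2, hiso h h.2, mul_one]
      rw [Finset.sum_congr rfl fun h _ => hconst h, Finset.sum_const, Finset.card_univ,
        nsmul_eq_mul, Nat.card_eq_fintype_card]
    · rw [if_neg hy]
      rw [hHP] at hy
      push_neg at hy
      obtain ⟨h₀, hh₀, hne⟩ := hy
      set c : Kˣ := σ (y * h₀) * (σ y)⁻¹ with hc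
      have hcne : (c : K) ≠ 1 := by
        intro h1
        apply hne
        have hc1 : c = 1 := Units.ext (by simpa using h1)
        rw [hiso h₀ hh₀, mul_one]
        rw [hc] at hc1
        exact mul_inv_eq_one.mp hc1
      have hstep : ∀ h ∈ H, (σ (y * (h * h₀)) : K) = (c : K) * σ (y * h) := by
        intro h hh
        have hd := hδ h h₀ y
        rw [hiso h hh, hiso h₀ hh₀, hiso _ (H.mul_mem hh hh₀)] at hd
        have hdK := congrArg (fun u : Kˣ => (u : K)) hd
        push_cast at hdK
        rw [show h₀ * y = y * h₀ from mul_comm _ _,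
          show h * y = y * h from mul_comm _ _,
          show h * h₀ * y = y * (h * h₀) from mul_comm _ _] at hdK
        have hy0 : (σ y : K) ≠ 0 := (σ y).ne_zero
        field_simp at hdK
        have hdK2 : (σ (y * (h * h₀)) : K) * (σ y) = (σ (y * h)) * (σ (y * h₀)) := by
          apply mul_right_cancel₀ hy0
          linear_combination (σ y : K) * hdK
        rw [hc]
        push_cast
        field_simp
        linear_combination hdK2
      have hS : ∑ h : H, (σ (y * h) : K) = c * ∑ h : H, (σ (y * h) : K) := by
        have hre : ∑ h : H, (σ (y * h) : K)
            = ∑ h : H, (σ (y * ((h * ⟨h₀, hh₀⟩ : H) : A)) : K) := by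
          exact (Fintype.sum_equiv (Equiv.mulRight (⟨h₀, hh₀⟩ : H))
            (fun h => (σ (y * ((h * ⟨h₀, hh₀⟩ : H) : A)) : K))
            (fun h => (σ (y * h) : K)) (fun h => rfl)).symm
        conv_lhs => rw [hre]
        rw [Finset.mul_sum]
        refine Finset.sum_congr rfl fun h _ => ?_
        rw [show ((h * ⟨h₀, hh₀⟩ : H) : A) = (h : A) * h₀ from rfl]
        exact hstep h h.2
      have : (1 - (c : K)) * ∑ h : H, (σ (y * h) : K) = 0 := by
        linear_combination hS
      rcases mul_eq_zero.mp this with h | h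
      · exact absurd (by linear_combination -h : (c : K) = 1) hcne
      · exact h
  -- decompose the sum over A into cosets of H
  have decomp : ∑ a : A, (σ a : K) = ∑ q : A ⧸ H, ∑ h : H, (σ (q.out * h) : K) := by
    rw [← Finset.sum_fiberwise Finset.univ (QuotientGroup.mk : A → A ⧸ H)
      (fun a => (σ a : K))]
    refine Finset.sum_congr rfl fun q _ => ?_
    refine Finset.sum_bij' (fun a ha => (⟨q.out⁻¹ * a, ?_⟩ : H))
      (fun h _ => q.out * (h : A)) ?_ ?_ ?_ ?_ ?_
    · exact QuotientGroup.eq.mp ((QuotientGroup.out_eq' q).trans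
        (Finset.mem_filter.mp ha).2.symm)
    · intro a ha
      exact Finset.mem_univ _
    · intro h _
      refine Finset.mem_filter.mpr ⟨Finset.mem_univ _, ?_⟩
      rw [QuotientGroup.mk_mul_of_mem _ h.2, QuotientGroup.out_eq']
    · intro a ha
      simp [mul_inv_cancel_left]
    · intro h _
      ext
      simp [inv_mul_cancel_left]
    · intro a ha
      simp [mul_inv_cancel_left]
  -- rewrite using key
  rw [decomp, Finset.sum_congr rfl fun q _ => key q.out]
  -- the injection HP ⧸ N → A ⧸ H
  set φ : HP ⧸ H.subgroupOf HP →* A ⧸ H :=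
    QuotientGroup.map (H.subgroupOf HP) H HP.subtype le_rfl with hφdef
  have hφmk : ∀ x : HP, φ (QuotientGroup.mk x) = QuotientGroup.mk (x : A) := fun x => rfl
  have hφinj : Function.Injective φ := by
    intro x y
    induction x using QuotientGroup.induction_on with
    | H x =>
      induction y using QuotientGroup.induction_on with
      | H y =>
        intro hxy
        rw [hφmk, hφmk] at hxy
        have hmem : (x : A)⁻¹ * (y : A) ∈ H := QuotientGroup.eq.mp hxy
        exact QuotientGroup.eq.mpr (show (x⁻¹ * y : HP) ∈ H.subgroupOf HP from hmem)
  have himg : ∀ q : A ⧸ H, q ∉ Finset.univ.image φ →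
      (if q.out ∈ HP then (Nat.card H : K) * σ q.out else 0) = 0 := by
    intro q hq
    rw [if_neg]
    intro hmem
    apply hq
    refine Finset.mem_image.mpr ⟨QuotientGroup.mk (⟨q.out, hmem⟩ : HP), Finset.mem_univ _, ?_⟩
    rw [hφmk]
    exact QuotientGroup.out_eq' q
  have hF : ∀ q' : HP ⧸ H.subgroupOf HP,
      (if (φ q').out ∈ HP then (Nat.card H : K) * σ (φ q').out else 0)
        = (Nat.card H : K) * σbar q' := by
    intro q'
    induction q' using QuotientGroup.induction_on with
    | H x =>
      have hmemH : (x : A)⁻¹ * (φ (QuotientGroup.mk x)).out ∈ H := by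
        rw [hφmk]
        exact QuotientGroup.eq.mp (QuotientGroup.out_eq' (QuotientGroup.mk (x : A))).symm
      set y := (φ (QuotientGroup.mk x)).out with hy
      have hyx : y = (x : A) * ((x : A)⁻¹ * y) := by rw [mul_inv_cancel_left]
      have hyHP : y ∈ HP := by
        rw [hyx]
        exact HP.mul_mem x.2 (hHle hmemH)
      rw [if_pos hyHP, hσbar]
      congr 1
      rw [hyx, (hHP (x : A)).1 x.2 _ hmemH, hiso _ hmemH, mul_one]
  calc ∑ q : A ⧸ H, (if q.out ∈ HP then (Nat.card H : K) * σ q.out else 0)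
      = ∑ q ∈ Finset.univ.image φ,
          (if q.out ∈ HP then (Nat.card H : K) * σ q.out else 0) :=
        (Finset.sum_subset (Finset.subset_univ _) (fun q _ hq => himg q hq)).symm
    _ = ∑ q' : HP ⧸ H.subgroupOf HP,
          (if (φ q').out ∈ HP then (Nat.card H : K) * σ (φ q').out else 0) :=
        Finset.sum_image (fun x _ y _ h => hφinj h)
    _ = ∑ q' : HP ⧸ H.subgroupOf HP, (Nat.card H : K) * σbar q' :=
        Finset.sum_congr rfl fun q' _ => hF q'
    _ = (Nat.card H : K) * ∑ q : HP ⧸ H.subgroupOf HP, (σbar q : K) := by rw [Finset.mul_sum]
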